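/- Let λ > 0 and let b_n > 0 solve √(π/2) b_n exp(b_n²/2) = n with a_n = 1/b_n. Then there exists a constant C > 0 such that for all n ≥ 9, sup_{x∈ℝ} |F_λ^n(a_n x + b_n) - exp(-e^{-x})| > C / log n. -/

import Mathlib

open Real MeasureTheory Filter Set Topology

noncomputable def stdPhi (x : ℝ) : ℝ := (Real.sqrt (2 * Real.pi))⁻¹ * Real.exp (-x ^ 2 / 2)

noncomputable def stdCdf (x : ℝ) : ℝ := ∫ t in Set.Iic x, stdPhi t

noncomputable def snCdf (l x : ℝ) : ℝ := ∫ t in Set.Iic x, 2 * stdPhi t * stdCdf (l * t)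

lemma stdPhi_pos (x : ℝ) : 0 < stdPhi x := by
  have : 0 < Real.sqrt (2 * Real.pi) := Real.sqrt_pos.2 (by positivity)
  unfold stdPhi; positivity

lemma stdPhi_nonneg (x : ℝ) : 0 ≤ stdPhi x := (stdPhi_pos x).le

lemma stdPhi_eq (x : ℝ) : stdPhi x = (Real.sqrt (2 * Real.pi))⁻¹ * Real.exp (-(1/2 : ℝ) * x ^ 2) := by
  unfold stdPhi; ring_nf

lemma integrable_stdPhi : Integrable stdPhi := by
  have h := (integrable_exp_neg_mul_sq (b := (1/2:ℝ)) (by norm_num)).const_mul (Real.sqrt (2 * Real.pi))⁻¹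
  exact h.congr (Eventually.of_forall fun x => (stdPhi_eq x).symm)

lemma integral_stdPhi : ∫ x, stdPhi x = 1 := by
  have h : ∫ x, stdPhi x = (Real.sqrt (2 * Real.pi))⁻¹ * ∫ x : ℝ, Real.exp (-(1/2:ℝ) * x ^ 2) := by
    rw [← integral_const_mul]
    exact congrArg _ (funext fun x => stdPhi_eq x)
  rw [h, integral_gaussian]
  have : Real.pi / (1/2 : ℝ) = 2 * Real.pi := by ring
  rw [this, inv_mul_cancel₀ (ne_of_gt (Real.sqrt_pos.2 (by positivity)))]

lemma continuous_stdPhi : Continuous stdPhi := by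
  unfold stdPhi; continuity

lemma stdCdf_nonneg (x : ℝ) : 0 ≤ stdCdf x :=
  integral_nonneg fun t => stdPhi_nonneg t

lemma stdCdf_le_one (x : ℝ) : stdCdf x ≤ 1 := by
  rw [← integral_stdPhi]
  exact setIntegral_le_integral integrable_stdPhi (Eventually.of_forall stdPhi_nonneg)

lemma stdCdf_mono : Monotone stdCdf := fun a c hac =>
  setIntegral_mono_set integrable_stdPhi.integrableOn
    (Eventually.of_forall stdPhi_nonneg) (HasSubset.Subset.eventuallyLE (Iic_subset_Iic.2 hac))

lemma measurable_stdCdf : Measurable stdCdf := stdCdf_mono.measurable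

lemma stdCdf_add_tail (x : ℝ) : stdCdf x + ∫ t in Ioi x, stdPhi t = 1 := by
  rw [stdCdf, intervalIntegral.integral_Iic_add_Ioi integrable_stdPhi.integrableOn integrable_stdPhi.integrableOn,
    integral_stdPhi]

lemma stdPhi_neg (x : ℝ) : stdPhi (-x) = stdPhi x := by unfold stdPhi; rw [neg_pow]; ring_nf

lemma stdCdf_neg (x : ℝ) : stdCdf (-x) = 1 - stdCdf x := by
  have h1 : stdCdf (-x) = ∫ t in Ioi x, stdPhi t := by
    have : ∫ t in Iic (-x), stdPhi t = ∫ t in Iic (-x), stdPhi (-t) := by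
      exact setIntegral_congr_fun measurableSet_Iic fun t _ => (stdPhi_neg t).symm
    rw [stdCdf, this, integral_comp_neg_Iic, neg_neg]
  have := stdCdf_add_tail x
  linarith

section sn
variable (l : ℝ)

lemma measurable_snInt : Measurable (fun t => 2 * stdPhi t * stdCdf (l * t)) :=
  ((measurable_const.mul continuous_stdPhi.measurable).mul
    (measurable_stdCdf.comp (measurable_id.const_mul l)))

lemma integrable_snInt : Integrable (fun t => 2 * stdPhi t * stdCdf (l * t)) := by
  refine (integrable_stdPhi.const_mul 2).mono
    (measurable_snInt l).aestronglyMeasurable (Eventually.of_forall fun t => ?_)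
  have h0 := stdCdf_nonneg (l * t)
  have h1 := stdCdf_le_one (l * t)
  have h2 := stdPhi_nonneg t
  simp only [norm_eq_abs]
  rw [abs_of_nonneg (by positivity), abs_of_nonneg (by positivity)]
  nlinarith

lemma snInt_nonneg (t : ℝ) : 0 ≤ 2 * stdPhi t * stdCdf (l * t) := by
  have h0 := stdCdf_nonneg (l * t); have h2 := stdPhi_nonneg t; positivity

lemma snInt_le (t : ℝ) : 2 * stdPhi t * stdCdf (l * t) ≤ 2 * stdPhi t := by
  have h1 := stdCdf_le_one (l * t); have h2 := stdPhi_nonneg t; nlinarith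

lemma integral_snInt : ∫ t, 2 * stdPhi t * stdCdf (l * t) = 1 := by
  have hrefl : ∫ t, 2 * stdPhi t * stdCdf (l * t)
      = ∫ t, 2 * stdPhi t * stdCdf (-(l * t)) := by
    rw [← integral_neg_eq_self (fun t => 2 * stdPhi t * stdCdf (l * t)) volume]
    refine integral_congr_ae (Eventually.of_forall fun t => ?_)
    simp [stdPhi_neg, mul_neg]
  have hsum : (∫ t, 2 * stdPhi t * stdCdf (l * t)) + ∫ t, 2 * stdPhi t * stdCdf (l * t)
      = ∫ t, 2 * stdPhi t := by
    nth_rewrite 2 [hrefl]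
    rw [← integral_add (integrable_snInt l)]
    · refine integral_congr_ae (Eventually.of_forall fun t => ?_)
      show 2 * stdPhi t * stdCdf (l * t) + 2 * stdPhi t * stdCdf (-(l * t)) = 2 * stdPhi t
      rw [stdCdf_neg]; ring
    · exact (integrable_snInt (-l)).congr (Eventually.of_forall fun t => by simp [neg_mul])
  have h2 : ∫ t, 2 * stdPhi t = 2 := by
    rw [integral_const_mul, integral_stdPhi]; norm_num
  linarith

end sn

lemma snCdf_nonneg (l x : ℝ) : 0 ≤ snCdf l x :=
  integral_nonneg fun t => snInt_nonneg l t

lemma snCdf_le_one (l x : ℝ) : snCdf l x ≤ 1 := by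
  rw [← integral_snInt l]
  exact setIntegral_le_integral (integrable_snInt l) (Eventually.of_forall (snInt_nonneg l))

lemma snCdf_tail (l y : ℝ) :
    1 - snCdf l y = ∫ t in Ioi y, 2 * stdPhi t * stdCdf (l * t) := by
  have := intervalIntegral.integral_Iic_add_Ioi (b := y)
    (integrable_snInt l).integrableOn (integrable_snInt l).integrableOn
  rw [integral_snInt l] at this
  rw [snCdf] at *
  linarith

lemma snCdf_tail_le (l y : ℝ) :
    1 - snCdf l y ≤ 2 * ∫ t in Ioi y, stdPhi t := by
  rw [snCdf_tail, ← integral_const_mul]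
  exact setIntegral_mono_on (integrable_snInt l).integrableOn
    ((integrable_stdPhi.const_mul 2).integrableOn) measurableSet_Ioi
    (fun t _ => snInt_le l t)

lemma hasDerivAt_stdPhi (t : ℝ) : HasDerivAt stdPhi (-t * stdPhi t) t := by
  have h1 : HasDerivAt (fun t : ℝ => -t ^ 2 / 2) (-t) t := by
    have := ((hasDerivAt_pow 2 t).neg).div_const 2
    simpa using this.congr_deriv (by push_cast; ring)
  have h2 := (h1.exp).const_mul (Real.sqrt (2 * Real.pi))⁻¹
  exact h2.congr_deriv (by unfold stdPhi; ring)

lemma tendsto_stdPhi_atTop : Tendsto stdPhi atTop (𝓝 0) := by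
  have h1 : Tendsto (fun t : ℝ => t ^ 2 / 2) atTop atTop :=
    (tendsto_pow_atTop (two_ne_zero)).atTop_div_const (by norm_num)
  have h2 : Tendsto (fun t : ℝ => Real.exp (-(t ^ 2 / 2))) atTop (𝓝 0) :=
    (Real.tendsto_exp_neg_atTop_nhds_zero).comp h1
  have h3 := h2.const_mul (Real.sqrt (2 * Real.pi))⁻¹
  rw [mul_zero] at h3
  refine h3.congr fun t => ?_
  unfold stdPhi; ring_nf

lemma mills (y : ℝ) (hy : 0 < y) :
    ∫ t in Ioi y, stdPhi t ≤ stdPhi y * (y⁻¹ - (y⁻¹) ^ 3 + 3 * (y⁻¹) ^ 5) := by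
  set g : ℝ → ℝ := fun t => stdPhi t * (t⁻¹ - (t⁻¹) ^ 3 + 3 * (t⁻¹) ^ 5) with hg
  set g' : ℝ → ℝ := fun t => -(stdPhi t * (1 + 15 * (t⁻¹) ^ 6)) with hg'
  have hderiv : ∀ t ∈ Ioi y, HasDerivAt g (g' t) t := by
    intro t ht
    have htne : t ≠ 0 := ne_of_gt (hy.trans ht)
    have hinv : HasDerivAt (fun s : ℝ => s⁻¹) (-(t ^ 2)⁻¹) t := hasDerivAt_inv htne
    have hpoly : HasDerivAt (fun s : ℝ => s⁻¹ - (s⁻¹) ^ 3 + 3 * (s⁻¹) ^ 5)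
        ((1 - 3 * (t⁻¹) ^ 2 + 15 * (t⁻¹) ^ 4) * (-(t ^ 2)⁻¹)) t := by
      have h3 := (hinv.pow 3)
      have h5 := (hinv.pow 5)
      have := (hinv.sub h3).add (h5.const_mul 3)
      refine this.congr_deriv ?_
      field_simp
      ring_nf
      field_simp
      ring
    have := (hasDerivAt_stdPhi t).mul hpoly
    refine this.congr_deriv ?_
    rw [hg']
    field_simp
    ring
  have hint : IntegrableOn g' (Ioi y) := by
    have hmeas : Measurable g' := by
      refine (continuous_stdPhi.measurable.mul ?_).neg
      exact (measurable_const.add ((measurable_inv.pow_const 6).const_mul 15))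
    refine Integrable.mono ((integrable_stdPhi.const_mul (1 + 15 * (y⁻¹) ^ 6)).integrableOn)
      hmeas.aestronglyMeasurable ?_
    refine (ae_restrict_iff' measurableSet_Ioi).2 (Eventually.of_forall fun t ht => ?_)
    have hty : y ≤ t := le_of_lt ht
    have h0 : (0:ℝ) < t := lt_of_lt_of_le hy hty
    have hi : t⁻¹ ≤ y⁻¹ := by gcongr
    have hi0 : (0:ℝ) ≤ t⁻¹ := by positivity
    have h6 : (t⁻¹) ^ 6 ≤ (y⁻¹) ^ 6 := by gcongr
    have hp := stdPhi_nonneg t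
    simp only [norm_eq_abs, abs_neg, g']
    rw [abs_of_nonneg (by positivity), abs_of_nonneg (by positivity)]
    nlinarith
  have htend : Tendsto g atTop (𝓝 0) := by
    have hpoly : Tendsto (fun t : ℝ => t⁻¹ - (t⁻¹) ^ 3 + 3 * (t⁻¹) ^ 5) atTop
        (𝓝 ((0:ℝ) - 0 ^ 3 + 3 * 0 ^ 5)) :=
      (tendsto_inv_atTop_zero.sub (tendsto_inv_atTop_zero.pow 3)).add
        ((tendsto_inv_atTop_zero.pow 5).const_mul 3)
    have := tendsto_stdPhi_atTop.mul hpoly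
    rw [zero_mul] at this
    exact this
  have hcont : ContinuousWithinAt g (Ici y) y := by
    refine ContinuousAt.continuousWithinAt ?_
    have : ContinuousAt (fun s : ℝ => s⁻¹) y := continuousAt_inv₀ (ne_of_gt hy)
    exact (continuous_stdPhi.continuousAt).mul
      ((this.sub (this.pow 3)).add ((this.pow 5).const_mul 3))
  have key := integral_Ioi_of_hasDerivAt_of_tendsto hcont hderiv hint htend
  have hmono : ∫ t in Ioi y, stdPhi t ≤ ∫ t in Ioi y, -g' t := by
    refine setIntegral_mono_on integrable_stdPhi.integrableOn hint.neg measurableSet_Ioi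
      fun t _ => ?_
    have hp := stdPhi_nonneg t
    have h6 : (0:ℝ) ≤ (t⁻¹) ^ 6 := by positivity
    simp only [g', neg_neg]
    nlinarith
  rw [integral_neg, key] at hmono
  simp only [zero_sub, neg_neg, hg] at hmono
  exact hmono

lemma exp_neg_le_one_sub {w : ℝ} (h0 : 0 ≤ w) (h4 : w ≤ 1/4) :
    Real.exp (-(w + w ^ 2)) ≤ 1 - w := by
  set z := w + w ^ 2 with hz
  have hz0 : 0 ≤ z := by positivity
  have h1 : (1 + z / 2) ^ 2 ≤ Real.exp z := by
    rw [show z = z/2 + z/2 by ring, Real.exp_add]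
    have h := Real.add_one_le_exp (z/2)
    nlinarith [Real.exp_pos (z/2)]
  have hp : (0:ℝ) < (1 + z / 2) ^ 2 := by positivity
  have h2 : Real.exp (-z) ≤ ((1 + z / 2) ^ 2)⁻¹ := by
    rw [Real.exp_neg]
    exact inv_anti₀ hp h1
  refine h2.trans ?_
  rw [inv_eq_one_div, div_le_iff₀ hp]
  have hcube : (0:ℝ) ≤ 1 - 3*w - w^2 - w^3 := by
    nlinarith [pow_le_pow_left₀ h0 h4 2, pow_le_pow_left₀ h0 h4 3]
  nlinarith [mul_nonneg (sq_nonneg w) hcube]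

-- Large-case arithmetic core
set_option maxHeartbeats 1000000 in
lemma large_core (n : ℕ) (B F : ℝ) (hB4 : 4 ≤ B) (hF0 : 0 ≤ F) (hF1 : F ≤ 1)
    (hnR : (9:ℝ) ≤ (n:ℝ))
    (hE2 : (2:ℝ) ≤ Real.exp 1)
    (hT : (n:ℝ) * (1 - F) ≤ 1 - (B⁻¹)^2 + 3*(B⁻¹)^4)
    (hBe : B^2 * Real.exp B ≤ (n:ℝ))
    (hlogB : B^2/2 ≤ Real.log n)
    (hlog2 : 2 ≤ Real.log n) :
    Real.exp (-10) / Real.log n < |F^n - Real.exp (-1)| := by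
  have hnpos : (0:ℝ) < n := by linarith
  have hlogpos : (0:ℝ) < Real.log n := by linarith
  have hB : (0:ℝ) < B := by linarith
  obtain ⟨w, hw⟩ : ∃ w : ℝ, w = 1 - F := ⟨_, rfl⟩
  obtain ⟨u, hu⟩ : ∃ u : ℝ, u = B⁻¹ := ⟨_, rfl⟩
  rw [← hw, ← hu] at hT
  have hu0 : 0 < u := by rw [hu]; positivity
  have hu4 : u ≤ 1/4 := by
    rw [hu, show (1/4 : ℝ) = (4:ℝ)⁻¹ by norm_num]
    exact inv_anti₀ (by norm_num) hB4
  have hBu : B * u = 1 := by rw [hu]; exact mul_inv_cancel₀ (ne_of_gt hB)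
  have hu216 : u^2 ≤ 1/16 := by
    linarith [mul_le_mul hu4 hu4 hu0.le (by norm_num : (0:ℝ) ≤ 1/4)]
  have hA1 : 1 - u^2 + 3*u^4 ≤ 1 := by
    linarith [mul_le_mul_of_nonneg_right hu216 (sq_nonneg u), sq_nonneg u]
  have hw0 : 0 ≤ w := by rw [hw]; linarith
  have hwn : w ≤ 1/(n:ℝ) := by
    rw [le_div_iff₀ hnpos]
    linarith [hT, hA1]
  have hw4 : w ≤ 1/4 := by
    have h1 : 1/(n:ℝ) ≤ 1/4 := by
      apply one_div_le_one_div_of_le (by norm_num) (by linarith)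
    linarith
  have hF1' : F = 1 - w := by rw [hw]; ring
  have hFn : Real.exp (-((n:ℝ) * (w + w^2))) ≤ F^n := by
    have h1 := exp_neg_le_one_sub hw0 hw4
    have h2 : (Real.exp (-(w + w^2)))^n ≤ F^n := by
      apply pow_le_pow_left₀ (Real.exp_pos _).le
      rw [hF1']
      linarith
    rw [show -((n:ℝ)*(w + w^2)) = (n:ℝ) * (-(w + w^2)) by ring, Real.exp_nat_mul]
    exact h2
  have hnw2 : (n:ℝ) * (w + w^2) ≤ (1 - u^2 + 3*u^4) + 1/n := by
    have h5 : (n:ℝ)*w*w ≤ 1*(1/n) := mul_le_mul (hT.trans hA1) hwn hw0 zero_le_one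
    have hexp : (n:ℝ)*(w+w^2) = (n:ℝ)*w + (n:ℝ)*w*w := by ring
    rw [hexp]
    linarith [hT, h5]
  have he4 : (16:ℝ) ≤ Real.exp B := by
    have h3a := pow_le_pow_left₀ (by norm_num : (0:ℝ) ≤ 2) hE2 4
    norm_num at h3a
    have h5 : Real.exp 4 ≤ Real.exp B := Real.exp_le_exp.2 (by linarith)
    linarith
  have h1n : 1/(n:ℝ) ≤ u^2/16 := by
    rw [div_le_div_iff₀ hnpos (by norm_num)]
    have h6 : (16:ℝ)*B^2 ≤ n := by
      have h6a := mul_le_mul_of_nonneg_left he4 (sq_nonneg B)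
      linarith [hBe]
    have h7 : B^2*u^2 = 1 := by linear_combination (B*u + 1) * hBu
    have h8 := mul_le_mul_of_nonneg_right h6 (sq_nonneg u)
    linarith [h7, h8]
  have hdelta : u^2*(3/4) ≤ u^2 - 3*u^4 - 1/n := by
    have hq := mul_le_mul_of_nonneg_right hu216 (sq_nonneg u)
    linarith [h1n, hq]
  have hFn2 : Real.exp (-1 + (3/4)*u^2) ≤ F^n :=
    le_trans (Real.exp_le_exp.2 (by linarith)) hFn
  have hgap : Real.exp (-1) * ((3/4)*u^2) ≤ F^n - Real.exp (-1) := by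
    have h := Real.add_one_le_exp ((3/4)*u^2)
    have h2 : Real.exp (-1 + (3/4)*u^2) = Real.exp (-1) * Real.exp ((3/4)*u^2) := by
      rw [← Real.exp_add]
    have h3 := mul_le_mul_of_nonneg_left h (Real.exp_pos (-(1:ℝ))).le
    linarith [hFn2, h2, h3]
  have hu2log : 1/(2*Real.log n) ≤ u^2 := by
    rw [div_le_iff₀ (by positivity)]
    have h7 : u^2*B^2 = 1 := by linear_combination (B*u + 1) * hBu
    have h8 := mul_le_mul_of_nonneg_left hlogB (sq_nonneg u)
    linarith [h7, h8]
  have h9 : (10:ℝ) ≤ Real.exp 9 := by linarith [Real.add_one_le_exp (9:ℝ)]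
  have hlt : Real.exp (-10) < Real.exp (-1) * (3/8) := by
    rw [show (-10:ℝ) = -1 + -9 by norm_num, Real.exp_add, Real.exp_neg (9:ℝ)]
    have h0 := Real.exp_pos (-(1:ℝ))
    have h8 : (Real.exp 9)⁻¹ < 3/8 := by
      rw [inv_lt_comm₀ (by positivity) (by norm_num)]
      linarith
    exact mul_lt_mul_of_pos_left h8 h0
  have hchain : Real.exp (-1) * (3/8) / Real.log n ≤ F^n - Real.exp (-1) := by
    have hlogne : Real.log n ≠ 0 := ne_of_gt hlogpos
    have h1 : Real.exp (-1) * (3/8) / Real.log n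
        = Real.exp (-1) * (3/4) * (1/(2*Real.log n)) := by
      field_simp
      ring
    rw [h1]
    have h2 : Real.exp (-1) * (3/4) * (1/(2*Real.log n))
        ≤ Real.exp (-1) * (3/4) * u^2 :=
      mul_le_mul_of_nonneg_left hu2log (by positivity)
    linarith [hgap, h2]
  have hdiv : Real.exp (-10) / Real.log n < Real.exp (-1) * (3/8) / Real.log n := by
    gcongr
  calc Real.exp (-10) / Real.log n
      < Real.exp (-1) * (3/8) / Real.log n := hdiv
    _ ≤ F^n - Real.exp (-1) := hchain
    _ ≤ |F^n - Real.exp (-1)| := le_abs_self _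

-- Small-case arithmetic core
set_option maxHeartbeats 1000000 in
lemma small_core (n : ℕ) (B F : ℝ) (hB1 : 1 < B) (hB4 : B < 4) (hF0 : 0 ≤ F)
    (hE2 : (2:ℝ) ≤ Real.exp 1) (hE3 : Real.exp 1 < 3)
    (hT : (n:ℝ) * (1 - F) ≤ Real.exp (-2) * Real.exp (-(2*B)))
    (hlog2 : 2 ≤ Real.log n) :
    Real.exp (-10) / Real.log n < |F^n - Real.exp (-Real.exp (-(2*B)))| := by
  have hlogpos : (0:ℝ) < Real.log n := by linarith
  obtain ⟨w, hw⟩ : ∃ w : ℝ, w = 1 - F := ⟨_, rfl⟩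
  obtain ⟨u, hu⟩ : ∃ u : ℝ, u = Real.exp (-(2*B)) := ⟨_, rfl⟩
  rw [← hw, ← hu] at hT
  rw [← hu]
  have hu0 : 0 < u := by rw [hu]; exact Real.exp_pos _
  have hu2 : u ≤ Real.exp (-2) := by
    rw [hu]; exact Real.exp_le_exp.2 (by linarith)
  have he2 : Real.exp (-2) ≤ 1/4 := by
    rw [Real.exp_neg, inv_le_comm₀ (Real.exp_pos 2) (by norm_num)]
    have h1 : Real.exp 2 = Real.exp 1 * Real.exp 1 := by rw [← Real.exp_add]; norm_num
    nlinarith [hE2, h1]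
  have hw2 : w ≤ 2 := by rw [hw]; linarith
  have hFn : 1 - Real.exp (-2) * u ≤ F^n := by
    have hbern := one_add_mul_le_pow (show (-2:ℝ) ≤ -w by linarith) n
    have hFw : F = 1 + -w := by rw [hw]; ring
    rw [hFw]
    linarith [hbern, hT]
  have hgum : Real.exp (-u) ≤ 1 - u/2 := by
    have h1 : 1 + u ≤ Real.exp u := by linarith [Real.add_one_le_exp u]
    have h3 : Real.exp (-u) ≤ (1+u)⁻¹ := by
      rw [Real.exp_neg]
      exact inv_anti₀ (by positivity) h1
    refine h3.trans ?_
    rw [inv_eq_one_div, div_le_iff₀ (by positivity)]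
    have hun : u ≤ 1 := by linarith
    linarith [mul_le_mul_of_nonneg_right hun hu0.le]
  have hgap : u/4 ≤ F^n - Real.exp (-u) := by
    have h := mul_le_mul_of_nonneg_right he2 hu0.le
    linarith [hFn, hgum, h]
  have hu8 : Real.exp (-(8:ℝ)) ≤ u := by
    rw [hu]; exact Real.exp_le_exp.2 (by linarith)
  have hstep1 : Real.exp (-10) / Real.log n ≤ Real.exp (-10) / 2 := by
    apply div_le_div_of_nonneg_left (Real.exp_pos _).le (by norm_num) hlog2
  have hstep2 : Real.exp (-10) / 2 < Real.exp (-(8:ℝ)) / 4 := by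
    rw [div_lt_div_iff₀ (by norm_num) (by norm_num),
      show (-10:ℝ) = -8 + -2 by norm_num, Real.exp_add]
    have h1 : Real.exp (-2) < 1/2 := by linarith
    have h2 := mul_lt_mul_of_pos_left h1 (Real.exp_pos (-(8:ℝ)))
    linarith [h2, Real.exp_pos (-(8:ℝ))]
  calc Real.exp (-10) / Real.log n
      ≤ Real.exp (-10) / 2 := hstep1
    _ < Real.exp (-(8:ℝ)) / 4 := hstep2
    _ ≤ u/4 := by linarith
    _ ≤ F^n - Real.exp (-u) := hgap
    _ ≤ |F^n - Real.exp (-u)| := le_abs_self _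

set_option maxHeartbeats 1000000 in
theorem stmt_10 (l : ℝ) (hl : 0 < l) (b : ℕ → ℝ)
    (hb : ∀ n : ℕ, 1 ≤ n → 0 < b n ∧
      Real.sqrt (Real.pi / 2) * b n * Real.exp ((b n) ^ 2 / 2) = n) :
    ∃ C > 0, ∀ n : ℕ, 9 ≤ n →
      C / Real.log n <
        ⨆ x : ℝ, |(snCdf l ((b n)⁻¹ * x + b n)) ^ n - Real.exp (-Real.exp (-x))| := by
  refine ⟨Real.exp (-10), Real.exp_pos _, fun n hn => ?_⟩
  have hn1 : 1 ≤ n := le_trans (by norm_num) hn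
  obtain ⟨hB, hbeq⟩ := hb n hn1
  set B := b n with hBdef
  clear hb
  have hnR : (9:ℝ) ≤ (n:ℝ) := by exact_mod_cast hn
  have hnpos : (0:ℝ) < n := by linarith
  have hs1 : 1 ≤ Real.sqrt (Real.pi/2) := by
    rw [show (1:ℝ) = Real.sqrt 1 by simp]
    exact Real.sqrt_le_sqrt (by nlinarith [Real.pi_gt_three])
  have hs2 : Real.sqrt (Real.pi/2) ≤ 3/2 := by
    rw [show (3/2:ℝ) = Real.sqrt ((3/2)^2) by rw [Real.sqrt_sq]; norm_num]
    exact Real.sqrt_le_sqrt (by nlinarith [Real.pi_le_four])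
  have hE2 : (2:ℝ) ≤ Real.exp 1 := by linarith [Real.exp_one_gt_d9]
  have hE3 : Real.exp 1 < 3 := by linarith [Real.exp_one_lt_d9]
  have hB1 : 1 < B := by
    by_contra h
    push_neg at h
    have h2 : Real.exp (B^2/2) ≤ Real.exp 1 := by
      apply Real.exp_le_exp.2; nlinarith
    have h3 : (n:ℝ) ≤ (3/2) * 1 * Real.exp 1 := by
      rw [← hbeq]
      have hep := Real.exp_pos (B^2/2)
      have hBnn := hB.le
      gcongr
    nlinarith
  have hsplit : Real.sqrt (2*Real.pi) = 2 * Real.sqrt (Real.pi/2) := by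
    rw [show (2:ℝ)*Real.pi = 2^2*(Real.pi/2) by ring,
      Real.sqrt_mul (by positivity), Real.sqrt_sq (by norm_num)]
  have hkey : ∀ y : ℝ, (n:ℝ) * stdPhi y = B/2 * Real.exp ((B^2 - y^2)/2) := by
    intro y
    rw [← hbeq]
    unfold stdPhi
    rw [hsplit, show (B^2 - y^2)/2 = B^2/2 + -y^2/2 by ring, Real.exp_add]
    have h0 : (0:ℝ) < Real.sqrt (Real.pi/2) := by linarith
    field_simp
  have hexpn : Real.exp (B^2/2) ≤ (n:ℝ) := by
    rw [← hbeq]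
    have h1 : 1 ≤ Real.sqrt (Real.pi/2) * B := by nlinarith
    nlinarith [Real.exp_pos (B^2/2), mul_nonneg (sub_nonneg.2 h1) (Real.exp_pos (B^2/2)).le]
  have hlogB : B^2/2 ≤ Real.log n := (Real.le_log_iff_exp_le hnpos).2 hexpn
  have hlog2 : 2 ≤ Real.log n := by
    refine (Real.le_log_iff_exp_le hnpos).2 ?_
    have h1 : Real.exp 2 = Real.exp 1 * Real.exp 1 := by
      rw [← Real.exp_add]; norm_num
    nlinarith [Real.exp_pos 1, hE3, h1]
  have hbdd : BddAbove (Set.range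
      (fun x : ℝ => |(snCdf l (B⁻¹ * x + B)) ^ n - Real.exp (-Real.exp (-x))|)) := by
    refine ⟨1, ?_⟩
    rintro v ⟨x, rfl⟩
    have h1 : 0 ≤ snCdf l (B⁻¹ * x + B) := snCdf_nonneg _ _
    have h2 : snCdf l (B⁻¹ * x + B) ≤ 1 := snCdf_le_one _ _
    have hp1 : (snCdf l (B⁻¹ * x + B))^n ≤ 1 := pow_le_one₀ h1 h2
    have hp0 : 0 ≤ (snCdf l (B⁻¹ * x + B))^n := pow_nonneg h1 n
    have hq1 : Real.exp (-Real.exp (-x)) ≤ 1 := by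
      rw [show (1:ℝ) = Real.exp 0 by simp]
      exact Real.exp_le_exp.2 (neg_nonpos.2 (Real.exp_pos _).le)
    have hq0 : (0:ℝ) < Real.exp (-Real.exp (-x)) := Real.exp_pos _
    rw [abs_sub_le_iff]
    constructor <;> linarith
  by_cases hB4 : 4 ≤ B
  · -- large case: witness x = 0
    refine lt_of_lt_of_le ?_ (le_ciSup hbdd (0:ℝ))
    show Real.exp (-10) / Real.log n
        < |(snCdf l (B⁻¹ * (0:ℝ) + B)) ^ n - Real.exp (-Real.exp (-(0:ℝ)))|
    clear hbdd
    have harg : B⁻¹ * (0:ℝ) + B = B := by ring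
    rw [harg, neg_zero, Real.exp_zero]
    -- tail estimate
    have hT : (n:ℝ) * (1 - snCdf l B) ≤ 1 - (B⁻¹)^2 + 3*(B⁻¹)^4 := by
      have htail : 1 - snCdf l B ≤ 2 * ∫ t in Ioi B, stdPhi t := snCdf_tail_le l B
      have hI : ∫ t in Ioi B, stdPhi t ≤ stdPhi B * (B⁻¹ - (B⁻¹)^3 + 3*(B⁻¹)^5) :=
        mills B (by linarith)
      have hnphiB : (n:ℝ) * stdPhi B = B/2 := by
        have h := hkey B
        simpa using h
      have h1 : (n:ℝ) * (1 - snCdf l B) ≤ (n:ℝ) * (2 * ∫ t in Ioi B, stdPhi t) :=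
        mul_le_mul_of_nonneg_left htail (by positivity)
      have h2a := mul_le_mul_of_nonneg_left hI (show (0:ℝ) ≤ 2*(n:ℝ) by positivity)
      have h2 : (n:ℝ) * (2 * ∫ t in Ioi B, stdPhi t)
          ≤ 2 * ((n:ℝ) * stdPhi B) * (B⁻¹ - (B⁻¹)^3 + 3*(B⁻¹)^5) := by
        calc (n:ℝ) * (2 * ∫ t in Ioi B, stdPhi t)
            = 2*(n:ℝ) * ∫ t in Ioi B, stdPhi t := by ring
          _ ≤ 2*(n:ℝ) * (stdPhi B * (B⁻¹ - (B⁻¹)^3 + 3*(B⁻¹)^5)) := h2a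
          _ = 2 * ((n:ℝ) * stdPhi B) * (B⁻¹ - (B⁻¹)^3 + 3*(B⁻¹)^5) := by ring
      have hBu : B * B⁻¹ = 1 := mul_inv_cancel₀ (ne_of_gt hB)
      have h3 : 2 * ((n:ℝ) * stdPhi B) * (B⁻¹ - (B⁻¹)^3 + 3*(B⁻¹)^5)
          = 1 - (B⁻¹)^2 + 3*(B⁻¹)^4 := by
        rw [hnphiB]
        linear_combination (1 - (B⁻¹)^2 + 3*(B⁻¹)^4) * hBu
      linarith [h1, h2, h3]
    have hBe : B^2 * Real.exp B ≤ (n:ℝ) := by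
      rw [← hbeq]
      have h1 : Real.exp B * Real.exp B ≤ Real.exp (B^2/2) := by
        rw [← Real.exp_add]; apply Real.exp_le_exp.2; nlinarith
      have h2 : B ≤ Real.exp B := by linarith [Real.add_one_le_exp B]
      have hp := Real.exp_pos B
      have hq := Real.exp_pos (B^2/2)
      nlinarith [mul_le_mul_of_nonneg_left h1 (show (0:ℝ) ≤ B by linarith),
        mul_le_mul_of_nonneg_left h2 (mul_nonneg (show (0:ℝ) ≤ B by linarith) hp.le),
        mul_le_mul_of_nonneg_right (sub_nonneg.2 hs1)
          (mul_nonneg (show (0:ℝ) ≤ B by linarith) hq.le)]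
    exact large_core n B (snCdf l B) hB4 (snCdf_nonneg l B) (snCdf_le_one l B) hnR hE2 hT hBe hlogB hlog2
  · -- small case: witness x = 2*B
    push_neg at hB4
    refine lt_of_lt_of_le ?_ (le_ciSup hbdd (2*B))
    show Real.exp (-10) / Real.log n
        < |(snCdf l (B⁻¹ * (2*B) + B)) ^ n - Real.exp (-Real.exp (-(2*B)))|
    clear hbdd
    have hB0 : B ≠ 0 := ne_of_gt hB
    have harg : B⁻¹ * (2*B) + B = 2 + B := by
      field_simp
    rw [harg]
    set y : ℝ := 2 + B with hy
    have hy3 : 3 < y := by rw [hy]; linarith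
    have hyinv : (0:ℝ) < y⁻¹ := by rw [hy]; positivity
    have hT : (n:ℝ) * (1 - snCdf l y) ≤ Real.exp (-2) * Real.exp (-(2*B)) := by
      have htail : 1 - snCdf l y ≤ 2 * ∫ t in Ioi y, stdPhi t := snCdf_tail_le l y
      have hI : ∫ t in Ioi y, stdPhi t ≤ stdPhi y * (y⁻¹ - (y⁻¹)^3 + 3*(y⁻¹)^5) :=
        mills y (by linarith)
      have hyinv3 : y⁻¹ ≤ 1/3 := by
        rw [show (1/3 : ℝ) = (3:ℝ)⁻¹ by norm_num]
        exact inv_anti₀ (by norm_num) hy3.le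
      have hImono : stdPhi y * (y⁻¹ - (y⁻¹)^3 + 3*(y⁻¹)^5) ≤ stdPhi y * y⁻¹ := by
        have hp := stdPhi_nonneg y
        have hv2 : y⁻¹*y⁻¹ ≤ 1/9 :=
          le_trans (mul_le_mul hyinv3 hyinv3 hyinv.le (by norm_num)) (by norm_num)
        apply mul_le_mul_of_nonneg_left _ hp
        have hv3 : (0:ℝ) ≤ y⁻¹*y⁻¹*y⁻¹ := by positivity
        have hv5 := mul_le_mul_of_nonneg_right hv2 hv3
        nlinarith [hv3, hv5]
      have hnphiy : (n:ℝ) * stdPhi y = B/2 * Real.exp (-(2+2*B)) := by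
        have h := hkey y
        rw [h, hy, show (B^2 - (2+B)^2)/2 = -(2+2*B) by ring]
      have h1 : (n:ℝ) * (1 - snCdf l y) ≤ (n:ℝ) * (2 * ∫ t in Ioi y, stdPhi t) :=
        mul_le_mul_of_nonneg_left htail (by positivity)
      have h2a := mul_le_mul_of_nonneg_left (hI.trans hImono)
        (show (0:ℝ) ≤ 2*(n:ℝ) by positivity)
      have h2 : (n:ℝ) * (2 * ∫ t in Ioi y, stdPhi t) ≤ 2 * ((n:ℝ) * stdPhi y) * y⁻¹ := by
        calc (n:ℝ) * (2 * ∫ t in Ioi y, stdPhi t)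
            = 2*(n:ℝ) * ∫ t in Ioi y, stdPhi t := by ring
          _ ≤ 2*(n:ℝ) * (stdPhi y * y⁻¹) := h2a
          _ = 2 * ((n:ℝ) * stdPhi y) * y⁻¹ := by ring
      have h3 : 2 * ((n:ℝ) * stdPhi y) * y⁻¹ ≤ Real.exp (-2) * Real.exp (-(2*B)) := by
        rw [hnphiy]
        have hyne : y ≠ 0 := by rw [hy]; positivity
        have hby : B * y⁻¹ ≤ 1 := by
          rw [← mul_inv_cancel₀ hyne]
          apply mul_le_mul_of_nonneg_right (by rw [hy]; linarith) hyinv.le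
        have hee : Real.exp (-(2+2*B)) = Real.exp (-2) * Real.exp (-(2*B)) := by
          rw [← Real.exp_add]
          congr 1
          ring
        rw [hee]
        have hep : (0:ℝ) < Real.exp (-2) * Real.exp (-(2*B)) := by positivity
        have h3a := mul_le_mul_of_nonneg_right hby hep.le
        nlinarith [h3a]
      linarith [h1, h2, h3]
    exact small_core n B (snCdf l y) hB1 hB4 (snCdf_nonneg l y) hE2 hE3 hT hlog2
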